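/- Let w be a standard Brownian motion, T > 0, 0 = t_0 < t_1 < ... < t_N = T a partition with mesh δ = max_k (t_{k+1} - t_k), and define d_t = max{t_k : t_k ≤ t}. Then there is an absolute constant C (depending only on T) such that E[ sup_{t∈[0,T]} (w_t - w_{d_t})² ] ≤ C δ log(1/δ) for all δ ≤ 1/2. -/

import Mathlib

open MeasureTheory ProbabilityTheory Set Real
open scoped ENNReal NNReal

lemma BM.int_exp_neg_mul (b a0 : ℝ) (hb : 0 < b) :
    ∫ x in Ioi a0, Real.exp (-(b * x)) = b⁻¹ * Real.exp (-(b * a0)) := by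
  have := integral_comp_mul_left_Ioi (fun y => Real.exp (-y)) a0 hb
  simp only [smul_eq_mul] at this
  rw [this, integral_exp_neg_Ioi]

lemma BM.gauss_neg (v : ℝ≥0) :
    (gaussianReal 0 v).map (fun x => -x) = gaussianReal 0 v := by
  have h : (gaussianReal 0 v).map ((-1 : ℝ) * ·) = gaussianReal (-1 * 0) (⟨(-1:ℝ)^2, sq_nonneg _⟩ * v) := gaussianReal_map_const_mul (-1)
  have h2 : ((fun x : ℝ => -1 * x)) = (fun x : ℝ => -x) := by funext x; ring
  rw [show ((-1 : ℝ) * · ) = (fun x : ℝ => -x) from h2] at h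
  rw [h]
  congr 1
  · ring
  · ext
    show (-1:ℝ)^2 * (v:ℝ) = v
    norm_num

lemma BM.gauss_half (v : ℝ≥0) : (2 : ℝ≥0∞)⁻¹ ≤ gaussianReal 0 v (Ici 0) := by
  have hsym : gaussianReal 0 v (Iic 0) = gaussianReal 0 v (Ici 0) := by
    calc gaussianReal 0 v (Iic 0) = gaussianReal 0 v (Neg.neg ⁻¹' Ici 0) := by
          congr 1; ext x; simp
    _ = ((gaussianReal 0 v).map Neg.neg) (Ici 0) :=
          (Measure.map_apply measurable_neg measurableSet_Ici).symm
    _ = gaussianReal 0 v (Ici 0) := by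
          rw [show (Neg.neg : ℝ → ℝ) = fun x => -x from rfl, BM.gauss_neg]
  have h1 : (1 : ℝ≥0∞) ≤ gaussianReal 0 v (Ici 0) + gaussianReal 0 v (Iic 0) := by
    have : (univ : Set ℝ) = Ici 0 ∪ Iic 0 := by
      ext x; simp [le_total 0 x]
    calc (1:ℝ≥0∞) = gaussianReal 0 v univ := by simp
    _ ≤ _ := by rw [this]; exact measure_union_le _ _
  rw [hsym] at h1
  have h2 : (1 : ℝ≥0∞) ≤ 2 * gaussianReal 0 v (Ici 0) := by
    rw [two_mul]; exact h1
  calc (2:ℝ≥0∞)⁻¹ = 2⁻¹ * 1 := by rw [mul_one]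
  _ ≤ 2⁻¹ * (2 * gaussianReal 0 v (Ici 0)) := by exact mul_le_mul_right h2 _
  _ = gaussianReal 0 v (Ici 0) := by
      rw [← mul_assoc, ENNReal.inv_mul_cancel two_ne_zero (by norm_num), one_mul]

lemma BM.gauss_tail (v : ℝ≥0) {a : ℝ} (ha : 0 < a) (hva : (v : ℝ) ≤ a ^ 2) :
    gaussianReal 0 v (Ici a) ≤ ENNReal.ofReal (Real.exp (-a ^ 2 / (2 * v))) := by
  by_cases hv : v = 0
  · subst hv
    rw [gaussianReal_zero_var, Measure.dirac_apply' _ measurableSet_Ici]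
    simp [indicator, ha.not_ge]
  · have hv' : (0:ℝ) < v := lt_of_le_of_ne (NNReal.coe_nonneg v) (by exact_mod_cast Ne.symm hv)
    rw [gaussianReal_apply_eq_integral 0 hv (Ici a)]
    apply ENNReal.ofReal_le_ofReal
    set c : ℝ := (Real.sqrt (2 * π * v))⁻¹ with hc
    have hcpos : 0 < c := by
      rw [hc]; positivity
    set b : ℝ := a / v with hb
    have hbpos : 0 < b := by positivity
    have key : ∀ x ∈ Ici a, gaussianPDFReal 0 v x
        ≤ c * Real.exp (-a ^ 2 / (2 * v)) * Real.exp (-(b * (x - a))) := by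
      intro x hx
      simp only [mem_Ici] at hx
      rw [gaussianPDFReal]
      simp only [sub_zero, one_div]
      rw [← hc, mul_assoc, ← Real.exp_add]
      apply mul_le_mul_of_nonneg_left _ hcpos.le
      apply Real.exp_le_exp.2
      rw [div_add' _ _ _ (by positivity), div_le_div_iff₀ (by positivity) (by positivity)]
      have h1 : a ^ 2 + 2 * a * (x - a) ≤ x ^ 2 := by nlinarith [sq_nonneg (x - a)]
      have : -a ^ 2 + -(b * (x - a)) * (2 * ↑v) = -(a^2 + 2 * a * (x-a)) := by
        rw [hb]; field_simp; ring
      rw [this]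
      nlinarith
    have hint1 : IntegrableOn (gaussianPDFReal 0 v) (Ici a) := by
      exact (integrable_gaussianPDFReal 0 v).integrableOn
    have hint2 : IntegrableOn
        (fun x => c * Real.exp (-a ^ 2 / (2 * v)) * Real.exp (-(b * (x - a)))) (Ici a) := by
      have hI : IntegrableOn (fun x => Real.exp (-(b * (x - a)))) (Ici a) := by
        rw [integrableOn_Ici_iff_integrableOn_Ioi]
        have : (fun x => Real.exp (-(b * (x - a)))) = fun x => Real.exp (b * a) * Real.exp (-b * x) := by
          funext x; rw [← Real.exp_add]; ring_nf
        rw [this]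
        exact (exp_neg_integrableOn_Ioi a hbpos).const_mul _
      exact hI.const_mul _
    calc ∫ x in Ici a, gaussianPDFReal 0 v x
        ≤ ∫ x in Ici a, c * Real.exp (-a ^ 2 / (2 * v)) * Real.exp (-(b * (x - a))) :=
          setIntegral_mono_on hint1 hint2 measurableSet_Ici key
    _ = c * Real.exp (-a ^ 2 / (2 * v)) * ∫ x in Ici a, Real.exp (-(b * (x - a))) := by
          rw [integral_const_mul]
    _ = c * Real.exp (-a ^ 2 / (2 * v)) * b⁻¹ := by
          congr 1
          rw [integral_Ici_eq_integral_Ioi]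
          have : ∀ x : ℝ, Real.exp (-(b * (x - a))) = Real.exp (b * a) * Real.exp (-(b * x)) := by
            intro x; rw [← Real.exp_add]; ring_nf
          simp_rw [this]
          rw [integral_const_mul, BM.int_exp_neg_mul b a hbpos]
          rw [show Real.exp (b*a) * (b⁻¹ * Real.exp (-(b*a))) = b⁻¹ * (Real.exp (b*a) * Real.exp (-(b*a))) by ring, ← Real.exp_add]
          simp
    _ ≤ Real.exp (-a ^ 2 / (2 * v)) := by
          rw [mul_comm c _, mul_assoc]
          apply mul_le_of_le_one_right (Real.exp_nonneg _)
          -- c * b⁻¹ ≤ 1 : (√(2πv))⁻¹ * (v/a) ≤ 1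
          have hbinv : b⁻¹ = v / a := by rw [hb]; field_simp
      
          rw [hbinv, hc]
          rw [inv_mul_le_iff₀ (by positivity), mul_one]
          have hs : Real.sqrt v ≤ Real.sqrt (2 * π * v) := by
            apply Real.sqrt_le_sqrt
            nlinarith [Real.pi_gt_three]
          have hva' : Real.sqrt v ≤ a := by
            have := Real.sqrt_le_sqrt hva
            rwa [Real.sqrt_sq ha.le] at this
          have h2 : (v:ℝ) / a ≤ Real.sqrt v := by
            rw [div_le_iff₀ ha]
            nlinarith [Real.sq_sqrt (NNReal.coe_nonneg v), Real.sqrt_nonneg (v:ℝ)]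
          linarith



lemma BM.levy {Ω : Type} [MeasurableSpace Ω] (μ : Measure Ω) [IsProbabilityMeasure μ]
    (n : ℕ) (X : Fin n → Ω → ℝ) (hX : ∀ i, Measurable (X i))
    (hind : iIndepFun X μ)
    (hhalf : ∀ j : ℕ,
      (2 : ℝ≥0∞)⁻¹ ≤ μ {ω | 0 ≤ ∑ i ∈ Finset.univ.filter (fun i : Fin n => j ≤ (i : ℕ)), X i ω})
    (a : ℝ) :
    μ {ω | ∃ j, j ≤ n ∧ a ≤ ∑ i ∈ Finset.univ.filter (fun i : Fin n => (i : ℕ) < j), X i ω}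
      ≤ 2 * μ {ω | a ≤ ∑ i, X i ω} := by
  set S : ℕ → Ω → ℝ := fun j ω => ∑ i ∈ Finset.univ.filter (fun i : Fin n => (i : ℕ) < j), X i ω
    with hS
  set R : ℕ → Ω → ℝ := fun j ω => ∑ i ∈ Finset.univ.filter (fun i : Fin n => j ≤ (i : ℕ)), X i ω
    with hR
  have hSR : ∀ j ω, S j ω + R j ω = ∑ i, X i ω := by
    intro j ω
    rw [hS, hR]
    simp only
    rw [← Finset.sum_filter_add_sum_filter_not Finset.univ (fun i : Fin n => (i : ℕ) < j)
      (fun i => X i ω)]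
    congr 1
    apply Finset.sum_congr _ (fun _ _ => rfl)
    apply Finset.filter_congr
    intro i _
    simp [not_lt]
  have hmeasS : ∀ j, Measurable (S j) := fun j => Finset.measurable_sum _ (fun i _ => hX i)
  set A : ℕ → Set Ω := fun j => {ω | a ≤ S j ω} ∩ ⋂ i ∈ Finset.range j, {ω | S i ω < a} with hA
  have hAmeas : ∀ j, MeasurableSet (A j) := by
    intro j
    exact (measurableSet_le measurable_const (hmeasS j)).inter
      (Finset.measurableSet_biInter _ (fun i _ => measurableSet_lt (hmeasS i) measurable_const))
  have hcover : {ω | ∃ j, j ≤ n ∧ a ≤ S j ω} = ⋃ j ∈ Finset.range (n + 1), A j := by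
    ext ω
    simp only [mem_setOf_eq, mem_iUnion, Finset.mem_range, exists_prop]
    constructor
    · rintro ⟨j, hj, hja⟩
      have hex : ∃ m, a ≤ S m ω := ⟨j, hja⟩
      refine ⟨Nat.find hex, ?_, ?_, ?_⟩
      · exact Nat.lt_succ_of_le (le_trans (Nat.find_min' hex hja) hj)
      · exact Nat.find_spec hex
      · simp only [mem_iInter, Finset.mem_range, mem_setOf_eq]
        intro i hi
        exact not_le.mp (Nat.find_min hex hi)
    · rintro ⟨j, hj, hja, _⟩
      exact ⟨j, Nat.lt_succ_iff.mp hj, hja⟩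
  have hdisj : Set.PairwiseDisjoint ↑(Finset.range (n + 1)) A := by
    intro x _ y _ hxy
    wlog hlt : x < y generalizing x y
    · exact (this (by assumption) (by assumption) hxy.symm
        (by omega)).symm
    apply Set.disjoint_left.mpr
    intro ω hωx hωy
    have h2 := hωy.2
    simp only [mem_iInter, Finset.mem_range, mem_setOf_eq] at h2
    exact absurd hωx.1 (not_le.2 (h2 x hlt))
  have hkey : ∀ j, μ (A j) ≤ 2 * μ (A j ∩ {ω | 0 ≤ R j ω}) := by
    intro j
    -- independence
    have hile : ∀ i : Fin n, MeasurableSpace.comap (X i) inferInstance ≤ _ :=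
      fun i => (hX i).comap_le
    have hIndep := indep_iSup_of_disjoint hile hind.iIndep
      (S := {i : Fin n | (i : ℕ) < j}) (T := {i : Fin n | j ≤ (i : ℕ)})
      (Set.disjoint_left.mpr (by intro i hi hj; simp only [mem_setOf_eq] at hi hj; omega))
    set M1 : MeasurableSpace Ω := ⨆ i ∈ {i : Fin n | (i : ℕ) < j},
      MeasurableSpace.comap (X i) inferInstance with hM1
    set M2 : MeasurableSpace Ω := ⨆ i ∈ {i : Fin n | j ≤ (i : ℕ)},
      MeasurableSpace.comap (X i) inferInstance with hM2
    have hXM1 : ∀ k : Fin n, (k : ℕ) < j → Measurable[M1] (X k) := by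
      intro k hk
      exact (measurable_iff_comap_le.mpr le_rfl).mono
        (le_iSup₂ (f := fun (i : Fin n) (_ : i ∈ {i : Fin n | (i : ℕ) < j}) =>
          MeasurableSpace.comap (X i) inferInstance) k hk) le_rfl
    have hXM2 : ∀ k : Fin n, j ≤ (k : ℕ) → Measurable[M2] (X k) := by
      intro k hk
      exact (measurable_iff_comap_le.mpr le_rfl).mono
        (le_iSup₂ (f := fun (i : Fin n) (_ : i ∈ {i : Fin n | j ≤ (i : ℕ)}) =>
          MeasurableSpace.comap (X i) inferInstance) k hk) le_rfl
    have hSM1 : ∀ i, i ≤ j → Measurable[M1] (S i) := by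
      intro i hi
      apply Finset.measurable_sum
      intro k hk
      simp only [Finset.mem_filter] at hk
      exact hXM1 k (lt_of_lt_of_le hk.2 hi)
    have hAM1 : MeasurableSet[M1] (A j) := by
      refine MeasurableSet.inter (measurableSet_le measurable_const (hSM1 j le_rfl)) ?_
      exact Finset.measurableSet_biInter _
        (fun i hi => measurableSet_lt (hSM1 i (le_of_lt (Finset.mem_range.mp hi)))
          measurable_const)
    have hBM2 : MeasurableSet[M2] {ω | 0 ≤ R j ω} := by
      apply measurableSet_le measurable_const
      apply Finset.measurable_sum
      intro k hk
      simp only [Finset.mem_filter] at hk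
      exact hXM2 k hk.2
    have hmul : μ (A j ∩ {ω | 0 ≤ R j ω}) = μ (A j) * μ {ω | 0 ≤ R j ω} :=
      (hIndep.indepSet_of_measurableSet hAM1 hBM2).measure_inter_eq_mul
    calc μ (A j) = 2 * (2⁻¹ * μ (A j)) := by
          rw [← mul_assoc, ENNReal.mul_inv_cancel two_ne_zero (by norm_num), one_mul]
    _ ≤ 2 * (μ {ω | 0 ≤ R j ω} * μ (A j)) :=
          mul_le_mul_right (mul_le_mul_left (hhalf j) _) 2
    _ = 2 * μ (A j ∩ {ω | 0 ≤ R j ω}) := by rw [hmul]; ring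
  -- final chain
  have hABsub : (⋃ j ∈ Finset.range (n + 1), A j ∩ {ω | 0 ≤ R j ω}) ⊆ {ω | a ≤ ∑ i, X i ω} := by
    intro ω hω
    simp only [mem_iUnion, Finset.mem_range, exists_prop] at hω
    obtain ⟨j, _, hωA, hωB⟩ := hω
    have := hSR j ω
    simp only [mem_setOf_eq] at hωA hωB ⊢
    have h1 : a ≤ S j ω := hωA.1
    linarith
  calc μ {ω | ∃ j, j ≤ n ∧ a ≤ S j ω}
      = ∑ j ∈ Finset.range (n + 1), μ (A j) := by
        rw [hcover]; exact measure_biUnion_finset hdisj (fun j _ => hAmeas j)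
  _ ≤ ∑ j ∈ Finset.range (n + 1), 2 * μ (A j ∩ {ω | 0 ≤ R j ω}) :=
        Finset.sum_le_sum (fun j _ => hkey j)
  _ = 2 * ∑ j ∈ Finset.range (n + 1), μ (A j ∩ {ω | 0 ≤ R j ω}) := by
        rw [Finset.mul_sum]
  _ = 2 * μ (⋃ j ∈ Finset.range (n + 1), A j ∩ {ω | 0 ≤ R j ω}) := by
        congr 1
        exact (measure_biUnion_finset
          (hdisj.mono (fun j => inter_subset_left))
          (fun j _ => (hAmeas j).inter
            (measurableSet_le measurable_const
              (Finset.measurable_sum _ (fun i _ => hX i))))).symm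
  _ ≤ 2 * μ {ω | a ≤ ∑ i, X i ω} := mul_le_mul_right (measure_mono hABsub) 2

section Cell
variable {Ω : Type} [MeasurableSpace Ω] (μ : Measure Ω) [IsProbabilityMeasure μ]

lemma BM.half_of_gauss {f : Ω → ℝ} (hf : Measurable f) {v : ℝ≥0}
    (hlaw : μ.map f = gaussianReal 0 v) :
    (2 : ℝ≥0∞)⁻¹ ≤ μ {ω | 0 ≤ f ω} := by
  have h : μ {ω | 0 ≤ f ω} = (μ.map f) (Ici 0) := by
    rw [Measure.map_apply hf measurableSet_Ici]
    rfl
  rw [h, hlaw]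
  exact BM.gauss_half v

lemma BM.tail_of_gauss {f : Ω → ℝ} (hf : Measurable f) {v : ℝ≥0} {a : ℝ} (ha : 0 < a)
    (hva : (v : ℝ) ≤ a ^ 2) (hlaw : μ.map f = gaussianReal 0 v) :
    μ {ω | a ≤ f ω} ≤ ENNReal.ofReal (Real.exp (-a ^ 2 / (2 * v))) := by
  have h : μ {ω | a ≤ f ω} = (μ.map f) (Ici a) := by
    rw [Measure.map_apply hf measurableSet_Ici]
    rfl
  rw [h, hlaw]
  exact BM.gauss_tail v ha hva

lemma BM.map_neg_of_gauss {f : Ω → ℝ} (hf : Measurable f) {v : ℝ≥0}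
    (hlaw : μ.map f = gaussianReal 0 v) :
    μ.map (fun ω => -(f ω)) = gaussianReal 0 v := by
  have : (fun ω => -(f ω)) = (fun x : ℝ => -x) ∘ f := rfl
  rw [this, ← Measure.map_map measurable_neg hf, hlaw]
  exact BM.gauss_neg v

lemma BM.cell_fin (w : ℝ → Ω → ℝ)
    (hwmeas : ∀ t, Measurable (w t))
    (hlaw : ∀ s t : ℝ, 0 ≤ s → s ≤ t →
      μ.map (fun ω => w t ω - w s ω) = gaussianReal 0 (Real.toNNReal (t - s)))
    (hincr : ∀ (n : ℕ) (t : Fin (n + 1) → ℝ), Monotone t → (∀ i, 0 ≤ t i) →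
      iIndepFun
        (fun (i : Fin n) (ω : Ω) => w (t i.succ) ω - w (t i.castSucc) ω) μ)
    (p q a : ℝ) (hp : 0 ≤ p) (hpq : p ≤ q) (ha : 0 < a) (hqa : q - p ≤ a ^ 2)
    (F : Finset ℝ) (hpF : p ∈ F) (hFsub : ↑F ⊆ Icc p q) :
    μ {ω | ∃ s ∈ F, a ≤ |w s ω - w p ω|}
      ≤ 4 * ENNReal.ofReal (Real.exp (-a ^ 2 / (2 * (q - p)))) := by
  classical
  -- sorted enumeration of F
  have hcard : 0 < F.card := Finset.card_pos.mpr ⟨p, hpF⟩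
  set m : ℕ := F.card - 1 with hmdef
  have hm : F.card = m + 1 := by omega
  set u : Fin (m + 1) ↪o ℝ := F.orderEmbOfFin hm with hu
  have hmono : Monotone ⇑u := fun x y hxy => u.le_iff_le.mpr hxy
  have humem : ∀ i, u i ∈ F := F.orderEmbOfFin_mem hm
  have hurange : ∀ x ∈ F, ∃ i, u i = x := by
    intro x hx
    have : x ∈ Set.range ⇑u := by rw [F.range_orderEmbOfFin hm]; exact hx
    exact this
  have hu0 : u 0 = p := by
    refine le_antisymm ?_ ?_
    · obtain ⟨i, hi⟩ := hurange p hpF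
      calc u 0 ≤ u i := hmono (Fin.zero_le i)
      _ = p := hi
    · exact (hFsub (humem 0)).1
  have hnn : ∀ i, 0 ≤ u i := fun i => hp.trans (hFsub (humem i)).1
  set X : Fin m → Ω → ℝ := fun i ω => w (u i.succ) ω - w (u i.castSucc) ω with hX
  have hXmeas : ∀ i, Measurable (X i) := fun i => (hwmeas _).sub (hwmeas _)
  have hind : iIndepFun X μ := hincr m ⇑u hmono hnn
  set uN : ℕ → Fin (m + 1) := fun j => ⟨min j m, by omega⟩ with huN
  -- partial sums identity
  have hSsum : ∀ (j : ℕ) (ω : Ω),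
      (∑ i ∈ Finset.univ.filter (fun i : Fin m => (i : ℕ) < j), X i ω)
        = w (u (uN j)) ω - w (u 0) ω := by
    intro j
    induction j with
    | zero =>
      intro ω
      have h0 : uN 0 = 0 := by simp [huN, Fin.ext_iff]
      rw [h0]
      simp
    | succ j ih =>
      intro ω
      by_cases hj : j < m
      · have hstep : Finset.univ.filter (fun i : Fin m => (i : ℕ) < j + 1)
            = insert ⟨j, hj⟩ (Finset.univ.filter (fun i : Fin m => (i : ℕ) < j)) := by
          ext i
          simp only [Finset.mem_filter, Finset.mem_univ, true_and, Finset.mem_insert,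
            Fin.ext_iff]
          omega
        rw [hstep, Finset.sum_insert (by simp), ih]
        have h1 : (⟨j, hj⟩ : Fin m).succ = uN (j + 1) := by
          simp only [huN, Fin.ext_iff, Fin.val_succ]
          omega
        have h2 : (⟨j, hj⟩ : Fin m).castSucc = uN j := by
          simp only [huN, Fin.ext_iff, Fin.coe_castSucc]
          omega
        have h3 : X ⟨j, hj⟩ ω = w (u (uN (j + 1))) ω - w (u (uN j)) ω := by
          rw [hX]; simp only; rw [h1, h2]
        rw [h3]
        ring
      · have hstep : Finset.univ.filter (fun i : Fin m => (i : ℕ) < j + 1)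
            = Finset.univ.filter (fun i : Fin m => (i : ℕ) < j) := by
          ext i
          simp only [Finset.mem_filter, Finset.mem_univ, true_and]
          have := i.isLt
          omega
        have huNj : uN (j + 1) = uN j := by
          simp only [huN, Fin.ext_iff]
          omega
        rw [hstep, ih, huNj]
  have htot : ∀ ω, (∑ i, X i ω) = w (u (Fin.last m)) ω - w (u 0) ω := by
    intro ω
    have hfull : Finset.univ.filter (fun i : Fin m => (i : ℕ) < m) = Finset.univ := by
      ext i
      simp [i.isLt]
    have hlast : uN m = Fin.last m := by simp [huN, Fin.ext_iff]
    rw [← hlast, ← hSsum m ω, hfull]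
  have hRsum : ∀ (j : ℕ) (ω : Ω),
      (∑ i ∈ Finset.univ.filter (fun i : Fin m => j ≤ (i : ℕ)), X i ω)
        = w (u (Fin.last m)) ω - w (u (uN j)) ω := by
    intro j ω
    have hsplit := Finset.sum_filter_add_sum_filter_not Finset.univ
      (fun i : Fin m => (i : ℕ) < j) (fun i => X i ω)
    have hcongr : Finset.univ.filter (fun i : Fin m => ¬((i : ℕ) < j))
        = Finset.univ.filter (fun i : Fin m => j ≤ (i : ℕ)) := by
      ext i; simp [not_lt]
    rw [hcongr] at hsplit
    have h1 := hSsum j ω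
    have h2 := htot ω
    rw [h1, h2] at hsplit
    linarith
  -- laws of increments between sorted points
  have hlawinc : ∀ (i j : Fin (m + 1)), i ≤ j →
      μ.map (fun ω => w (u j) ω - w (u i) ω)
        = gaussianReal 0 (Real.toNNReal (u j - u i)) :=
    fun i j hij => hlaw (u i) (u j) (hnn i) (hmono hij)
  -- the two tail bounds at the endpoint
  have hvle : (Real.toNNReal (u (Fin.last m) - u 0) : ℝ) ≤ a ^ 2 := by
    rw [Real.coe_toNNReal']
    have h1 : u (Fin.last m) - u 0 ≤ q - p := by
      have := (hFsub (humem (Fin.last m))).2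
      have := (hFsub (humem 0)).1
      linarith
    have := sq_nonneg a
    rcases le_total (u (Fin.last m) - u 0) 0 with h | h
    · rw [max_eq_right h]; positivity
    · rw [max_eq_left h]; linarith
  have htailbound : gaussianReal 0 (Real.toNNReal (u (Fin.last m) - u 0)) (Ici a)
      ≤ ENNReal.ofReal (Real.exp (-a ^ 2 / (2 * (q - p)))) := by
    rcases le_or_gt (u (Fin.last m) - u 0) 0 with hv0 | hv0
    · have : Real.toNNReal (u (Fin.last m) - u 0) = 0 := by
        rw [Real.toNNReal_eq_zero]; exact hv0
      rw [this, gaussianReal_zero_var, Measure.dirac_apply' _ measurableSet_Ici]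
      simp [indicator, ha.not_ge]
    · have hvq : u (Fin.last m) - u 0 ≤ q - p := by
        have h1 := (hFsub (humem (Fin.last m))).2
        have h2 := (hFsub (humem 0)).1
        linarith
      have hqp : 0 < q - p := lt_of_lt_of_le hv0 hvq
      have hcoe : (Real.toNNReal (u (Fin.last m) - u 0) : ℝ) = u (Fin.last m) - u 0 :=
        Real.coe_toNNReal _ hv0.le
      calc gaussianReal 0 (Real.toNNReal (u (Fin.last m) - u 0)) (Ici a)
          ≤ ENNReal.ofReal (Real.exp (-a ^ 2 /
              (2 * (Real.toNNReal (u (Fin.last m) - u 0) : ℝ)))) :=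
            BM.gauss_tail _ ha hvle
      _ ≤ ENNReal.ofReal (Real.exp (-a ^ 2 / (2 * (q - p)))) := by
            apply ENNReal.ofReal_le_ofReal
            apply Real.exp_le_exp.2
            rw [hcoe, neg_div, neg_div, neg_le_neg_iff]
            exact div_le_div_of_nonneg_left (sq_nonneg a) (by linarith) (by linarith)
  -- Lévy for X
  have hhalfX : ∀ j : ℕ, (2 : ℝ≥0∞)⁻¹ ≤
      μ {ω | 0 ≤ ∑ i ∈ Finset.univ.filter (fun i : Fin m => j ≤ (i : ℕ)), X i ω} := by
    intro j
    have hset : {ω | 0 ≤ ∑ i ∈ Finset.univ.filter (fun i : Fin m => j ≤ (i : ℕ)), X i ω}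
        = {ω | 0 ≤ w (u (Fin.last m)) ω - w (u (uN j)) ω} := by
      ext ω; rw [mem_setOf_eq, mem_setOf_eq, hRsum j ω]
    rw [hset]
    exact BM.half_of_gauss μ ((hwmeas _).sub (hwmeas _))
      (hlawinc (uN j) (Fin.last m) (Fin.le_last _))
  have hlevy1 := BM.levy μ m X hXmeas hind hhalfX a
  -- Lévy for -X
  set Xn : Fin m → Ω → ℝ := fun i ω => -(X i ω) with hXn
  have hXnmeas : ∀ i, Measurable (Xn i) := fun i => (hXmeas i).neg
  have hindn : iIndepFun Xn μ :=
    hind.comp (fun _ => fun x : ℝ => -x) (fun _ => measurable_neg)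
  have hsumneg : ∀ (s : Finset (Fin m)) (ω : Ω), ∑ i ∈ s, Xn i ω = -(∑ i ∈ s, X i ω) := by
    intro s ω
    simp [hXn]
  have hhalfXn : ∀ j : ℕ, (2 : ℝ≥0∞)⁻¹ ≤
      μ {ω | 0 ≤ ∑ i ∈ Finset.univ.filter (fun i : Fin m => j ≤ (i : ℕ)), Xn i ω} := by
    intro j
    have hset : {ω | 0 ≤ ∑ i ∈ Finset.univ.filter (fun i : Fin m => j ≤ (i : ℕ)), Xn i ω}
        = {ω | 0 ≤ -(w (u (Fin.last m)) ω - w (u (uN j)) ω)} := by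
      ext ω; rw [mem_setOf_eq, mem_setOf_eq, hsumneg, hRsum j ω]
    rw [hset]
    exact BM.half_of_gauss μ ((hwmeas _).sub (hwmeas _)).neg
      (BM.map_neg_of_gauss μ ((hwmeas _).sub (hwmeas _))
        (hlawinc (uN j) (Fin.last m) (Fin.le_last _)))
  have hlevy2 := BM.levy μ m Xn hXnmeas hindn hhalfXn a
  -- tail bounds for the endpoint sums
  have ht1 : μ {ω | a ≤ ∑ i, X i ω}
      ≤ ENNReal.ofReal (Real.exp (-a ^ 2 / (2 * (q - p)))) := by
    have hset : {ω | a ≤ ∑ i, X i ω}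
        = {ω | a ≤ w (u (Fin.last m)) ω - w (u 0) ω} := by
      ext ω; rw [mem_setOf_eq, mem_setOf_eq, htot ω]
    have hm1 : μ {ω | a ≤ w (u (Fin.last m)) ω - w (u 0) ω}
        = (μ.map (fun ω => w (u (Fin.last m)) ω - w (u 0) ω)) (Ici a) := by
      rw [Measure.map_apply (f := fun ω => w (u (Fin.last m)) ω - w (u 0) ω) ((hwmeas _).sub (hwmeas _)) measurableSet_Ici]
      rfl
    rw [hset, hm1, hlawinc 0 (Fin.last m) (Fin.zero_le _)]
    exact htailbound
  have ht2 : μ {ω | a ≤ ∑ i, Xn i ω}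
      ≤ ENNReal.ofReal (Real.exp (-a ^ 2 / (2 * (q - p)))) := by
    have hset : {ω | a ≤ ∑ i, Xn i ω}
        = {ω | a ≤ -(w (u (Fin.last m)) ω - w (u 0) ω)} := by
      ext ω; rw [mem_setOf_eq, mem_setOf_eq, hsumneg, htot ω]
    have hm1 : μ {ω | a ≤ -(w (u (Fin.last m)) ω - w (u 0) ω)}
        = (μ.map (fun ω => -(w (u (Fin.last m)) ω - w (u 0) ω))) (Ici a) := by
      rw [Measure.map_apply (f := fun ω => -(w (u (Fin.last m)) ω - w (u 0) ω)) ((hwmeas _).sub (hwmeas _)).neg measurableSet_Ici]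
      rfl
    rw [hset, hm1, BM.map_neg_of_gauss μ (f := fun ω => w (u (Fin.last m)) ω - w (u 0) ω) ((hwmeas _).sub (hwmeas _))
      (hlawinc 0 (Fin.last m) (Fin.zero_le _))]
    exact htailbound
  -- event inclusion
  have hsub : {ω | ∃ s ∈ F, a ≤ |w s ω - w p ω|} ⊆
      {ω | ∃ j, j ≤ m ∧ a ≤ ∑ i ∈ Finset.univ.filter (fun i : Fin m => (i : ℕ) < j), X i ω}
      ∪ {ω | ∃ j, j ≤ m ∧ a ≤ ∑ i ∈ Finset.univ.filter (fun i : Fin m => (i : ℕ) < j), Xn i ω} := by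
    rintro ω ⟨s, hsF, hsa⟩
    obtain ⟨i, hi⟩ := hurange s hsF
    have hiN : uN (i : ℕ) = i := by
      have := i.isLt
      simp only [huN, Fin.ext_iff]
      omega
    have hval : w s ω - w p ω
        = ∑ i' ∈ Finset.univ.filter (fun i' : Fin m => (i' : ℕ) < (i : ℕ)), X i' ω := by
      rw [hSsum, hiN, hi, hu0]
    have hile : (i : ℕ) ≤ m := Nat.lt_succ_iff.mp i.isLt
    rcases le_abs.mp hsa with h | h
    · left
      rw [hval] at h
      exact ⟨(i : ℕ), hile, h⟩
    · right
      rw [hval] at h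
      refine ⟨(i : ℕ), hile, ?_⟩
      rw [hsumneg]
      exact h
  -- finish
  calc μ {ω | ∃ s ∈ F, a ≤ |w s ω - w p ω|}
      ≤ μ ({ω | ∃ j, j ≤ m ∧ a ≤ ∑ i ∈ Finset.univ.filter (fun i : Fin m => (i : ℕ) < j), X i ω}
        ∪ {ω | ∃ j, j ≤ m ∧ a ≤ ∑ i ∈ Finset.univ.filter (fun i : Fin m => (i : ℕ) < j), Xn i ω}) :=
        measure_mono hsub
  _ ≤ μ {ω | ∃ j, j ≤ m ∧ a ≤ ∑ i ∈ Finset.univ.filter (fun i : Fin m => (i : ℕ) < j), X i ω}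
      + μ {ω | ∃ j, j ≤ m ∧ a ≤ ∑ i ∈ Finset.univ.filter (fun i : Fin m => (i : ℕ) < j), Xn i ω} :=
        measure_union_le _ _
  _ ≤ 2 * μ {ω | a ≤ ∑ i, X i ω} + 2 * μ {ω | a ≤ ∑ i, Xn i ω} := add_le_add hlevy1 hlevy2
  _ ≤ 2 * ENNReal.ofReal (Real.exp (-a ^ 2 / (2 * (q - p))))
      + 2 * ENNReal.ofReal (Real.exp (-a ^ 2 / (2 * (q - p)))) :=
        add_le_add (mul_le_mul_right ht1 2) (mul_le_mul_right ht2 2)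
  _ = 4 * ENNReal.ofReal (Real.exp (-a ^ 2 / (2 * (q - p)))) := by ring
end Cell
section Cnt
variable {Ω : Type} [MeasurableSpace Ω] (μ : Measure Ω) [IsProbabilityMeasure μ]

lemma BM.cell_countable (w : ℝ → Ω → ℝ)
    (hwmeas : ∀ t, Measurable (w t))
    (hlaw : ∀ s t : ℝ, 0 ≤ s → s ≤ t →
      μ.map (fun ω => w t ω - w s ω) = gaussianReal 0 (Real.toNNReal (t - s)))
    (hincr : ∀ (n : ℕ) (t : Fin (n + 1) → ℝ), Monotone t → (∀ i, 0 ≤ t i) →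
      iIndepFun
        (fun (i : Fin n) (ω : Ω) => w (t i.succ) ω - w (t i.castSucc) ω) μ)
    (p q a : ℝ) (hp : 0 ≤ p) (hpq : p ≤ q) (ha : 0 < a) (hqa : q - p ≤ a ^ 2)
    (D : Set ℝ) (hD : D.Countable) (hDsub : D ⊆ Icc p q) :
    μ {ω | ∃ s ∈ D, a ≤ |w s ω - w p ω|}
      ≤ 4 * ENNReal.ofReal (Real.exp (-a ^ 2 / (2 * (q - p)))) := by
  classical
  set D' : Set ℝ := insert p D with hD'
  have hD'c : D'.Countable := hD.insert p
  have hD'sub : D' ⊆ Icc p q := insert_subset ⟨le_refl p, hpq⟩ hDsub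
  obtain ⟨e, he⟩ := hD'c.exists_eq_range (insert_nonempty p D)
  set Sfin : ℕ → Finset ℝ := fun n => insert p ((Finset.range (n + 1)).image e) with hSfin
  have hSsub : ∀ n, ↑(Sfin n) ⊆ Icc p q := by
    intro n x hx
    simp only [hSfin, Finset.coe_insert, Set.mem_insert_iff, Finset.coe_image,
      Finset.coe_range] at hx
    rcases hx with hx | ⟨i, _, rfl⟩
    · subst hx; exact ⟨le_refl _, hpq⟩
    · exact hD'sub (by rw [he]; exact ⟨i, rfl⟩)
  set U : ℕ → Set Ω := fun n => {ω | ∃ s ∈ Sfin n, a ≤ |w s ω - w p ω|} with hU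
  have hUmono : Monotone U := by
    intro n n' hnn' ω hω
    obtain ⟨s, hs, hsa⟩ := hω
    refine ⟨s, ?_, hsa⟩
    simp only [hSfin, Finset.mem_insert, Finset.mem_image, Finset.mem_range] at hs ⊢
    rcases hs with rfl | ⟨i, hi, rfl⟩
    · exact Or.inl rfl
    · exact Or.inr ⟨i, by omega, rfl⟩
  have hsub : {ω | ∃ s ∈ D, a ≤ |w s ω - w p ω|} ⊆ ⋃ n, U n := by
    rintro ω ⟨s, hsD, hsa⟩
    have : s ∈ D' := mem_insert_of_mem p hsD
    rw [he] at this
    obtain ⟨i, rfl⟩ := this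
    refine mem_iUnion.mpr ⟨i, e i, ?_, hsa⟩
    simp only [hSfin, Finset.mem_insert, Finset.mem_image, Finset.mem_range]
    exact Or.inr ⟨i, by omega, rfl⟩
  calc μ {ω | ∃ s ∈ D, a ≤ |w s ω - w p ω|} ≤ μ (⋃ n, U n) := measure_mono hsub
  _ = ⨆ n, μ (U n) := hUmono.measure_iUnion
  _ ≤ 4 * ENNReal.ofReal (Real.exp (-a ^ 2 / (2 * (q - p)))) := by
      apply iSup_le
      intro n
      exact BM.cell_fin μ w hwmeas hlaw hincr p q a hp hpq ha hqa (Sfin n)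
        (Finset.mem_insert_self p _) (hSsub n)
end Cnt
/-- A standard one-dimensional Brownian motion on `[0,∞)`. -/
def IsStdBrownianMotion {Ω : Type*} [MeasurableSpace Ω] (μ : Measure Ω)
    (w : ℝ → Ω → ℝ) : Prop :=
  (∀ t, Measurable (w t)) ∧
  (∀ᵐ ω ∂μ, w 0 ω = 0 ∧ Continuous fun t => w t ω) ∧
  (∀ s t : ℝ, 0 ≤ s → s ≤ t →
    μ.map (fun ω => w t ω - w s ω) = gaussianReal 0 (Real.toNNReal (t - s))) ∧
  (∀ (n : ℕ) (t : Fin (n + 1) → ℝ), Monotone t → (∀ i, 0 ≤ t i) →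
    iIndepFun
      (fun (i : Fin n) (ω : Ω) => w (t i.succ) ω - w (t i.castSucc) ω) μ)

theorem stmt_16 (T : ℝ) (hT : 0 < T) :
    ∃ C : ℝ, 0 < C ∧
      ∀ (Ω : Type) (_ : MeasurableSpace Ω) (μ : Measure Ω), IsProbabilityMeasure μ →
      ∀ (w : ℝ → Ω → ℝ), IsStdBrownianMotion μ w →
      ∀ (N : ℕ) (t : Fin (N + 1) → ℝ) (δ : ℝ),
        t 0 = 0 → t (Fin.last N) = T → Monotone t →
        (∀ k : Fin N, t k.succ - t k.castSucc ≤ δ) → 0 < δ → δ ≤ 1 / 2 →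
        ∀ d : ℝ → ℝ,
          (∀ s ∈ Icc (0:ℝ) T, ∃ k : Fin (N + 1),
            d s = t k ∧ t k ≤ s ∧ ∀ j : Fin (N + 1), t j ≤ s → t j ≤ t k) →
          ∫ ω, (⨆ s ∈ Icc (0:ℝ) T, (w s ω - w (d s) ω) ^ 2) ∂μ
            ≤ C * δ * Real.log (1 / δ) := by
  classical
  have hlog2 : 0 < Real.log 2 := Real.log_pos one_lt_two
  refine ⟨2 + 8 * T / Real.log 2, by positivity, ?_⟩
  intro Ω mΩ μ hprob w hw N t δ ht0 htlast htmono hmesh hδpos hδhalf d hd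
  obtain ⟨hwmeas, hae, hlaw, hincr⟩ := hw
  set C : ℝ := 2 + 8 * T / Real.log 2 with hC
  set L : ℝ := Real.log (1 / δ) with hL
  have hδ1 : δ < 1 := by linarith
  have hLlog2 : Real.log 2 ≤ L := by
    rw [hL]
    apply Real.log_le_log (by norm_num)
    rw [le_div_iff₀ hδpos]; linarith
  have hLpos : 0 < L := lt_of_lt_of_le hlog2 hLlog2
  set lam0 : ℝ := 2 * δ * L with hlam0
  have hlam0pos : 0 < lam0 := by positivity
  have hδlam0 : δ ≤ lam0 := by
    rw [hlam0]
    nlinarith [Real.log_two_gt_d9]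
  set F : Ω → ℝ := fun ω => ⨆ s ∈ Icc (0:ℝ) T, (w s ω - w (d s) ω) ^ 2 with hF
  have hFnn : ∀ ω, 0 ≤ F ω :=
    fun ω => Real.iSup_nonneg (fun s => Real.iSup_nonneg (fun _ => sq_nonneg _))
  have hRHSnn : 0 ≤ C * δ * L := by positivity
  by_cases hFm : AEStronglyMeasurable F μ
  swap
  · rw [integral_undef (fun h => hFm h.1)]
    exact hRHSnn
  rw [show (∫ ω, (⨆ s ∈ Icc (0:ℝ) T, (w s ω - w (d s) ω) ^ 2) ∂μ) = ∫ ω, F ω ∂μ from rfl]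
  rw [integral_eq_lintegral_of_nonneg_ae (Filter.Eventually.of_forall hFnn) hFm]
  apply ENNReal.toReal_le_of_le_ofReal hRHSnn
  rw [lintegral_eq_lintegral_meas_lt μ (Filter.Eventually.of_forall hFnn) hFm.aemeasurable]
  -- cell data
  set h : Fin N → ℝ := fun k => t k.succ - t k.castSucc with hh
  have hhnn : ∀ k, 0 ≤ h k := fun k => sub_nonneg.mpr (htmono (Fin.castSucc_le_succ k))
  have htnn : ∀ j : Fin (N + 1), 0 ≤ t j := fun j => ht0 ▸ htmono (Fin.zero_le j)
  have hsumh : ∑ k, h k = T := by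
    set g' : ℕ → ℝ := fun i => t ⟨min i N, by omega⟩ with hg'
    have h2 : ∀ k : Fin N, h k = (fun i : ℕ => g' (i + 1) - g' i) (k : ℕ) := by
      intro k
      have hk := k.isLt
      have e1 : (⟨min ((k : ℕ) + 1) N, by omega⟩ : Fin (N + 1)) = k.succ := by
        simp only [Fin.ext_iff, Fin.val_succ]; omega
      have e2 : (⟨min (k : ℕ) N, by omega⟩ : Fin (N + 1)) = k.castSucc := by
        simp only [Fin.ext_iff, Fin.coe_castSucc]; omega
      simp only [hg', hh]
      rw [e1, e2]
    calc ∑ k : Fin N, h k = ∑ k : Fin N, (fun i : ℕ => g' (i + 1) - g' i) (k : ℕ) :=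
          Finset.sum_congr rfl (fun k _ => h2 k)
    _ = ∑ i ∈ Finset.range N, (g' (i + 1) - g' i) := Fin.sum_univ_eq_sum_range (fun i => g' (i + 1) - g' i) N
    _ = g' N - g' 0 := Finset.sum_range_sub g' N
    _ = T := by
        have eN : (⟨min N N, by omega⟩ : Fin (N + 1)) = Fin.last N := by
          simp [Fin.ext_iff]
        have e0 : (⟨min 0 N, by omega⟩ : Fin (N + 1)) = 0 := by
          simp [Fin.ext_iff]
        simp only [hg']
        rw [eN, e0, htlast, ht0, sub_zero]
  set D : Fin N → Set ℝ := fun k =>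
    Icc (t k.castSucc) (t k.succ) ∩ Set.range ((↑) : ℚ → ℝ) with hD
  set E : Fin N → ℝ → Set Ω := fun k a =>
    {ω | ∃ s ∈ D k, a ≤ |w s ω - w (t k.castSucc) ω|} with hE
  set g : Fin N → ℝ → ℝ≥0∞ := fun k lam =>
    if h k = 0 then 0 else ENNReal.ofReal (4 * Real.exp (-lam / (2 * h k))) with hg
  -- pointwise inclusion
  have hincl : ∀ lam : ℝ, 0 < lam → ∀ ω : Ω, (w 0 ω = 0 ∧ Continuous fun u => w u ω) →
      lam < F ω → ω ∈ ⋃ k, E k (Real.sqrt lam) := by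
    intro lam hlampos ω hgood hω
    obtain ⟨hw0, hcont⟩ := hgood
    have hs' : ∃ s : ℝ, lam < ⨆ _ : s ∈ Icc (0:ℝ) T, (w s ω - w (d s) ω) ^ 2 := by
      by_contra hcon
      push_neg at hcon
      have hle : F ω ≤ lam := ciSup_le hcon
      linarith
    obtain ⟨s, hs⟩ := hs'
    have hsIcc : s ∈ Icc (0:ℝ) T := by
      by_contra hno
      have hz : (⨆ _ : s ∈ Icc (0:ℝ) T, (w s ω - w (d s) ω) ^ 2) = 0 := by
        haveI : IsEmpty (s ∈ Icc (0:ℝ) T) := ⟨hno⟩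
        exact Real.iSup_of_isEmpty _
      rw [hz] at hs; linarith
    haveI : Nonempty (s ∈ Icc (0:ℝ) T) := ⟨hsIcc⟩
    rw [ciSup_const] at hs
    obtain ⟨k0, hdk, hks, hmax⟩ := hd s hsIcc
    rcases eq_or_lt_of_le hsIcc.2 with hsT | hsT
    · exfalso
      have h1 : t (Fin.last N) ≤ s := by rw [htlast, ← hsT]
      have h2 : t (Fin.last N) ≤ t k0 := hmax _ h1
      have h3 : t k0 = s := le_antisymm hks (by rw [hsT, ← htlast]; exact h2)
      rw [hdk, h3] at hs
      simp only [sub_self] at hs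
      nlinarith
    · set J : Finset (Fin (N + 1)) := Finset.univ.filter (fun j => t j ≤ s) with hJ
      have hJne : J.Nonempty := ⟨0, by simp [hJ, ht0, hsIcc.1]⟩
      set j0 : Fin (N + 1) := J.max' hJne with hj0def
      have hj0s : t j0 ≤ s := by
        have hmem := J.max'_mem hJne
        simp only [hJ, Finset.mem_filter, Finset.mem_univ, true_and] at hmem
        exact hmem
      have hj0ne : j0 ≠ Fin.last N := by
        intro hcon
        rw [hcon, htlast] at hj0s
        linarith
      set k : Fin N := ⟨(j0 : ℕ), Fin.val_lt_last hj0ne⟩ with hkdef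
      have hcast : k.castSucc = j0 := by
        simp [hkdef, Fin.ext_iff]
      have hslt : s < t k.succ := by
        by_contra hcon
        push_neg at hcon
        have hmem : k.succ ∈ J := by
          simp only [hJ, Finset.mem_filter, Finset.mem_univ, true_and]
          exact hcon
        have hle := J.le_max' _ hmem
        rw [← hj0def] at hle
        have : ((k.succ : Fin (N + 1)) : ℕ) ≤ (j0 : ℕ) := hle
        simp only [Fin.val_succ, hkdef] at this
        omega
      have htk0 : t k0 = t j0 := by
        refine le_antisymm ?_ (hmax j0 hj0s)
        have hmem : k0 ∈ J := by
          simp only [hJ, Finset.mem_filter, Finset.mem_univ, true_and]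
          exact hks
        exact htmono (J.le_max' _ hmem)
      have hval : lam < (w s ω - w (t k.castSucc) ω) ^ 2 := by
        rw [hcast, ← htk0, ← hdk]
        exact hs
      have habs : Real.sqrt lam < |w s ω - w (t k.castSucc) ω| := by
        have h1 := Real.sqrt_lt_sqrt hlampos.le hval
        rwa [Real.sqrt_sq_eq_abs] at h1
      have hps : t k.castSucc ≤ s := by rw [hcast]; exact hj0s
      have hUopen : IsOpen {u : ℝ | Real.sqrt lam < |w u ω - w (t k.castSucc) ω|} :=
        isOpen_lt continuous_const ((hcont.sub continuous_const).abs)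
      obtain ⟨ε, hεpos, hball⟩ := Metric.isOpen_iff.mp hUopen s habs
      obtain ⟨r, hr1, hr2⟩ := exists_rat_btwn (lt_min (by linarith : s < s + ε) hslt)
      have hrq : (r : ℝ) < t k.succ := lt_of_lt_of_le hr2 (min_le_right _ _)
      have hrball : (r : ℝ) ∈ Metric.ball s ε := by
        rw [Metric.mem_ball, Real.dist_eq, abs_of_pos (by linarith : (0:ℝ) < (r : ℝ) - s)]
        have := lt_of_lt_of_le hr2 (min_le_left _ _)
        linarith
      have hrU := hball hrball
      refine mem_iUnion.mpr ⟨k, ?_⟩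
      exact ⟨(r : ℝ), ⟨⟨by linarith, hrq.le⟩, ⟨r, rfl⟩⟩, le_of_lt hrU⟩
  -- per-cell measure bound
  have hcell : ∀ (lam : ℝ), lam0 ≤ lam → ∀ k : Fin N, μ (E k (Real.sqrt lam)) ≤ g k lam := by
    intro lam hlam k
    have hlampos : 0 < lam := lt_of_lt_of_le hlam0pos hlam
    have hsq : Real.sqrt lam ^ 2 = lam := Real.sq_sqrt hlampos.le
    by_cases hk0 : h k = 0
    · have hEempty : E k (Real.sqrt lam) = ∅ := by
        ext ω
        simp only [hE, mem_setOf_eq, mem_empty_iff_false, iff_false, not_exists]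
        intro x
        rintro ⟨hxI, hge⟩
        obtain ⟨⟨hx1, hx2⟩, -⟩ := hxI
        have heq : t k.succ = t k.castSucc := by
          have : t k.succ - t k.castSucc = 0 := hk0
          linarith
        have hxeq : x = t k.castSucc := le_antisymm (heq ▸ hx2) hx1
        rw [hxeq, sub_self, abs_zero] at hge
        have := Real.sqrt_pos.mpr hlampos
        linarith
      rw [hEempty]
      simp
    · have hkpos : 0 < h k := lt_of_le_of_ne (hhnn k) (Ne.symm hk0)
      have hbd := BM.cell_countable μ w hwmeas hlaw hincr (t k.castSucc) (t k.succ)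
        (Real.sqrt lam) (htnn _) (htmono (Fin.castSucc_le_succ k))
        (Real.sqrt_pos.mpr hlampos)
        (by rw [hsq]
            calc t k.succ - t k.castSucc = h k := rfl
            _ ≤ δ := hmesh k
            _ ≤ lam0 := hδlam0
            _ ≤ lam := hlam)
        (D k) (Set.Countable.mono inter_subset_right (countable_range _))
        inter_subset_left
      refine le_trans hbd ?_
      have hqp : t k.succ - t k.castSucc = h k := rfl
      rw [hqp, hsq]
      simp only [hg, if_neg hk0]
      rw [ENNReal.ofReal_mul (by norm_num : (0:ℝ) ≤ 4), ENNReal.ofReal_ofNat]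
  -- key tail bound
  have hkey : ∀ lam : ℝ, lam0 ≤ lam → μ {ω | lam < F ω} ≤ ∑ k, g k lam := by
    intro lam hlam
    have h1 : μ {ω | lam < F ω} ≤ μ (⋃ k, E k (Real.sqrt lam)) := by
      apply measure_mono_ae
      filter_upwards [hae] with ω hgood hω
      exact hincl lam (lt_of_lt_of_le hlam0pos hlam) ω hgood hω
    refine h1.trans ((measure_iUnion_fintype_le _ _).trans ?_)
    exact Finset.sum_le_sum (fun k _ => hcell lam hlam k)
  -- integral estimate
  have hmg : ∀ k : Fin N, Measurable (g k) := by
    intro k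
    by_cases hk0 : h k = 0
    · simp only [hg, if_pos hk0]; exact measurable_const
    · simp only [hg, if_neg hk0]
      exact ((measurable_id'.neg.div_const (2 * h k)).exp.const_mul 4).ennreal_ofReal
  have hpart1 : ∫⁻ lam in Ioc 0 lam0, μ {a | lam < F a} ≤ ENNReal.ofReal lam0 := by
    calc ∫⁻ lam in Ioc 0 lam0, μ {a | lam < F a} ≤ ∫⁻ _ in Ioc 0 lam0, 1 :=
          lintegral_mono (fun lam => prob_le_one)
    _ = ENNReal.ofReal lam0 := by
        rw [setLIntegral_one, Real.volume_Ioc]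
        norm_num
  have hpercell : ∀ k : Fin N, ∫⁻ lam in Ioi lam0, g k lam ≤ ENNReal.ofReal (8 * δ * h k) := by
    intro k
    by_cases hk0 : h k = 0
    · simp [hg, hk0]
    · have hkpos : 0 < h k := lt_of_le_of_ne (hhnn k) (Ne.symm hk0)
      have hbpos : 0 < (2 * h k)⁻¹ := by positivity
      have hfun : ∀ lam : ℝ, g k lam = ENNReal.ofReal (4 * Real.exp (-((2 * h k)⁻¹ * lam))) := by
        intro lam
        simp only [hg, if_neg hk0]
        congr 2
        ring
      have hintg : IntegrableOn (fun lam => 4 * Real.exp (-((2 * h k)⁻¹ * lam))) (Ioi lam0) := by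
        have h1 : (fun lam => 4 * Real.exp (-((2 * h k)⁻¹ * lam)))
            = fun lam => 4 * Real.exp (-(2 * h k)⁻¹ * lam) := by
          funext lam; rw [neg_mul]
        rw [h1]
        exact (exp_neg_integrableOn_Ioi lam0 hbpos).const_mul 4
      calc ∫⁻ lam in Ioi lam0, g k lam
          = ∫⁻ lam in Ioi lam0, ENNReal.ofReal (4 * Real.exp (-((2 * h k)⁻¹ * lam))) :=
            lintegral_congr (fun lam => hfun lam)
      _ = ENNReal.ofReal (∫ lam in Ioi lam0, 4 * Real.exp (-((2 * h k)⁻¹ * lam))) :=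
            (ofReal_integral_eq_lintegral_ofReal hintg
              (Filter.Eventually.of_forall (fun lam => by positivity))).symm
      _ = ENNReal.ofReal (8 * h k * Real.exp (-(lam0 / (2 * h k)))) := by
            congr 1
            rw [integral_const_mul, BM.int_exp_neg_mul _ _ hbpos, inv_inv]
            ring_nf
      _ ≤ ENNReal.ofReal (8 * δ * h k) := by
            apply ENNReal.ofReal_le_ofReal
            have hexp : Real.exp (-(lam0 / (2 * h k))) ≤ δ := by
              have hlogδ : Real.log δ = -L := by
                rw [hL, one_div, Real.log_inv, neg_neg]
              have h1 : -(lam0 / (2 * h k)) ≤ Real.log δ := by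
                rw [hlogδ, neg_le_neg_iff, le_div_iff₀ (by positivity)]
                rw [hlam0]
                have hmesh' : h k ≤ δ := hmesh k
                nlinarith [mul_le_mul_of_nonneg_left hmesh' (le_of_lt hLpos)]
              calc Real.exp (-(lam0 / (2 * h k))) ≤ Real.exp (Real.log δ) :=
                    Real.exp_le_exp.2 h1
              _ = δ := Real.exp_log hδpos
            calc 8 * h k * Real.exp (-(lam0 / (2 * h k))) ≤ 8 * h k * δ :=
                  mul_le_mul_of_nonneg_left hexp (by positivity)
            _ = 8 * δ * h k := by ring
  have hpart2 : ∫⁻ lam in Ioi lam0, μ {a | lam < F a} ≤ ENNReal.ofReal (8 * δ * T) := by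
    calc ∫⁻ lam in Ioi lam0, μ {a | lam < F a} ≤ ∫⁻ lam in Ioi lam0, ∑ k, g k lam := by
          apply setLIntegral_mono (Finset.measurable_sum _ (fun k _ => hmg k))
          intro lam hlam
          exact hkey lam (le_of_lt hlam)
    _ = ∑ k, ∫⁻ lam in Ioi lam0, g k lam :=
          lintegral_finset_sum _ (fun k _ => hmg k)
    _ ≤ ∑ k, ENNReal.ofReal (8 * δ * h k) := Finset.sum_le_sum (fun k _ => hpercell k)
    _ = ENNReal.ofReal (∑ k, 8 * δ * h k) :=
          (ENNReal.ofReal_sum_of_nonneg (fun k _ => by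
            have := hhnn k; positivity)).symm
    _ = ENNReal.ofReal (8 * δ * T) := by rw [← Finset.mul_sum, hsumh]
  calc ∫⁻ lam in Ioi 0, μ {a | lam < F a}
      = (∫⁻ lam in Ioc 0 lam0, μ {a | lam < F a})
        + ∫⁻ lam in Ioi lam0, μ {a | lam < F a} := by
        rw [← lintegral_union measurableSet_Ioi (Ioc_disjoint_Ioi le_rfl),
          Ioc_union_Ioi_eq_Ioi hlam0pos.le]
  _ ≤ ENNReal.ofReal lam0 + ENNReal.ofReal (8 * δ * T) := add_le_add hpart1 hpart2
  _ = ENNReal.ofReal (lam0 + 8 * δ * T) :=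
        (ENNReal.ofReal_add (by positivity) (by positivity)).symm
  _ ≤ ENNReal.ofReal (C * δ * L) := by
        apply ENNReal.ofReal_le_ofReal
        have key : 8 * δ * T ≤ 8 * T / Real.log 2 * (δ * L) := by
          rw [div_mul_eq_mul_div, le_div_iff₀ hlog2]
          nlinarith [mul_le_mul_of_nonneg_left hLlog2 (show (0:ℝ) ≤ 8 * δ * T by positivity)]
        have expand : C * δ * L = 2 * δ * L + 8 * T / Real.log 2 * (δ * L) := by
          rw [hC]; ring
        rw [expand, hlam0]
        linarith
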